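/- Let R = k[x_1,x_2,x_3] and let A = R/I be a graded Artinian algebra with h-vector (1, 3, h_2, …, h_s). If h_{d−1} − h_d = 2(h_d − h_{d+1}) > 0 for some d with r_1(A) < d < s, then A is not level. -/

import Mathlib

open MvPolynomial Module Submodule

noncomputable section

/-- The degree of a monomial exponent vector. -/
def monDeg {n : ℕ} (μ : Fin n →₀ ℕ) : ℕ := ∑ i, μ i

variable (k : Type*) [Field k] {n : ℕ}

/-- A property `P` of tuples holds *generically* if it holds on a nonempty
Zariski-open subset of parameter space. -/
def Generic {ι : Type*} (P : (ι → k) → Prop) : Prop :=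
  ∃ p : MvPolynomial ι k, p ≠ 0 ∧ ∀ c : ι → k, MvPolynomial.eval c p ≠ 0 → P c

/-- The linear form with coefficient vector `c`. -/
def linForm (c : Fin n → k) : MvPolynomial (Fin n) k := ∑ i, MvPolynomial.C (c i) * X i

/-- `dim_k I_d`, the dimension of the degree-`d` piece of a homogeneous ideal. -/
def idim (I : Ideal (MvPolynomial (Fin n) k)) (d : ℕ) : ℕ :=
  finrank k ↥(Submodule.restrictScalars k I ⊓ homogeneousSubmodule (Fin n) k d)

/-- The Hilbert function of `A = R/I`. -/
def hilb (I : Ideal (MvPolynomial (Fin n) k)) (d : ℕ) : ℕ :=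
  finrank k ↥(homogeneousSubmodule (Fin n) k d) - idim k I d

/-- The reduction number `r₁(R/I)`: the least `ℓ` such that for a general linear
form `L`, `(R/(I+(L)))_{ℓ+1} = 0`. -/
def redNum (I : Ideal (MvPolynomial (Fin n) k)) : ℕ :=
  sInf {ℓ : ℕ | Generic k fun c : Fin n → k =>
    hilb k (I ⊔ Ideal.span {linForm k c}) (ℓ + 1) = 0}

/-- The degree-`d` part of the preimage in `R` of the socle of `A = R/I`:
homogeneous elements of degree `d` killed by every variable modulo `I`. -/
def socPiece (I : Ideal (MvPolynomial (Fin n) k)) (d : ℕ) :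
    Submodule k (MvPolynomial (Fin n) k) :=
  homogeneousSubmodule (Fin n) k d ⊓
    ⨅ i : Fin n, Submodule.comap (LinearMap.mulLeft k (X i)) (Submodule.restrictScalars k I)

/-- `dim_k soc(R/I)_d`. -/
def socDim (I : Ideal (MvPolynomial (Fin n) k)) (d : ℕ) : ℕ :=
  finrank k ↥(socPiece k I d) - idim k I d

/-- `R/I` is level with socle degree `s` : the socle is concentrated in degree `s`. -/
def IsLevel (I : Ideal (MvPolynomial (Fin n) k)) (s : ℕ) : Prop :=
  ∀ d : ℕ, d ≠ s → ∀ f ∈ socPiece k I d, f ∈ I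

/-- `dim_k (0 :_{R/I} L)_d` where `L` is the linear form with coefficients `c`. -/
def annDim (I : Ideal (MvPolynomial (Fin n) k)) (c : Fin n → k) (d : ℕ) : ℕ :=
  finrank k ↥(homogeneousSubmodule (Fin n) k d ⊓
      Submodule.comap (LinearMap.mulLeft k (linForm k c)) (Submodule.restrictScalars k I))
    - idim k I d

/-- `dim_k ((J : x)/J)_d` for `x` a variable (or any polynomial). -/
def colonDim (J : Ideal (MvPolynomial (Fin n) k)) (x : MvPolynomial (Fin n) k) (d : ℕ) : ℕ :=
  finrank k ↥(homogeneousSubmodule (Fin n) k d ⊓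
      Submodule.comap (LinearMap.mulLeft k x) (Submodule.restrictScalars k J))
    - idim k J d

/-- `R/I` has the Weak Lefschetz Property: there is a linear form `L` such that
each multiplication map `(R/I)_i → (R/I)_{i+1}` is injective or surjective. -/
def HasWLP (I : Ideal (MvPolynomial (Fin n) k)) : Prop :=
  ∃ c : Fin n → k, ∀ i : ℕ,
    (∀ f ∈ homogeneousSubmodule (Fin n) k i, linForm k c * f ∈ I → f ∈ I) ∨
    hilb k (I ⊔ Ideal.span {linForm k c}) (i + 1) = 0

/-! ### Binomial expansions -/

/-- The largest `m` with `C(m,i) ≤ h` (junk value if unbounded). -/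
def msup (h i : ℕ) : ℕ := sSup {m : ℕ | Nat.choose m i ≤ h}

/-- Auxiliary greedy binomial-expansion sum. -/
def expandAux (g : ℕ → ℕ → ℕ) : ℕ → ℕ → ℕ
  | 0, _ => 0
  | i + 1, h =>
    if h = 0 then 0
    else g (msup h (i + 1)) (i + 1) +
      expandAux g i (h - Nat.choose (msup h (i + 1)) (i + 1))

/-- `(h_{(i)})⁻ = C(m_i−1,i)+⋯+C(m_j−1,j)` from the `i`-binomial expansion of `h`. -/
def lowerDec (h i : ℕ) : ℕ := expandAux (fun m t => Nat.choose (m - 1) t) i h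

/-- Macaulay growth `h^{⟨i⟩} = C(m_i+1,i+1)+⋯+C(m_j+1,j+1)`. -/
def macGrow (h i : ℕ) : ℕ := expandAux (fun m t => Nat.choose (m + 1) (t + 1)) i h

/-- A sequence is an O-sequence if it starts at 1 and satisfies Macaulay's bound. -/
def IsOSeq (h : ℕ → ℕ) : Prop :=
  h 0 = 1 ∧ ∀ d : ℕ, 1 ≤ d → h (d + 1) ≤ macGrow (h d) d

/-! ### Graded Betti numbers via the Koszul complex -/

/-- The degree-`z` piece of a homogeneous ideal, indexed by `ℤ` (zero in negative degrees). -/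
def pieceZ (I : Ideal (MvPolynomial (Fin n) k)) (z : ℤ) :
    Submodule k (MvPolynomial (Fin n) k) :=
  if 0 ≤ z then Submodule.restrictScalars k I ⊓ homogeneousSubmodule (Fin n) k z.toNat else ⊥

theorem mulX_mem_pieceZ (I : Ideal (MvPolynomial (Fin n) k)) (i : Fin n) {z : ℤ}
    {x : MvPolynomial (Fin n) k} (hx : x ∈ pieceZ k I z) : X i * x ∈ pieceZ k I (z + 1) := by
  by_cases hz : 0 ≤ z
  · have hz1 : 0 ≤ z + 1 := by omega
    simp only [pieceZ, if_pos hz, Submodule.mem_inf, Submodule.restrictScalars_mem,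
      mem_homogeneousSubmodule] at hx
    simp only [pieceZ, if_pos hz1, Submodule.mem_inf, Submodule.restrictScalars_mem,
      mem_homogeneousSubmodule]
    refine ⟨I.mul_mem_left _ hx.1, ?_⟩
    have := (MvPolynomial.isHomogeneous_X k i).mul hx.2
    have hnat : (z + 1).toNat = 1 + z.toNat := by omega
    rwa [hnat]
  · simp only [pieceZ, if_neg hz, Submodule.mem_bot] at hx
    subst hx
    rw [mul_zero]
    exact Submodule.zero_mem _

/-- Multiplication by the variable `X i`, raising the degree by one. -/
def mulXmap (I : Ideal (MvPolynomial (Fin n) k)) (i : Fin n) {z w : ℤ} (hw : w = z + 1) :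
    ↥(pieceZ k I z) →ₗ[k] ↥(pieceZ k I w) :=
  hw ▸ (LinearMap.mulLeft k (X i)).restrict (fun x hx => mulX_mem_pieceZ k I i hx)

/-- Index type for the Koszul complex: `q`-element subsets of the variables. -/
abbrev kIdx (n q : ℕ) : Type := {S : Finset (Fin n) // S.card = q}

/-- The degree-`j` strand of the `q`-th term of the Koszul complex of `I`. -/
abbrev kSpace (I : Ideal (MvPolynomial (Fin n) k)) (q : ℕ) (j : ℤ) : Type _ :=
  ∀ _ : kIdx n q, ↥(pieceZ k I (j - q))

/-- The Koszul differential `K_{q+1} → K_q` (degree-`j` strand). -/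
def koszulD (I : Ideal (MvPolynomial (Fin n) k)) (q : ℕ) (j : ℤ) :
    kSpace k I (q + 1) j →ₗ[k] kSpace k I q j :=
  LinearMap.pi fun T =>
    ∑ i ∈ (Finset.univ \ T.1).attach,
      ((-1 : k) ^ (T.1.filter (fun l => l < i.1)).card) •
        ((mulXmap k I i.1 (show (j - (q : ℤ)) = (j - ((q : ℕ) + 1 : ℕ)) + 1 by push_cast; ring)).comp
          (LinearMap.proj (⟨insert i.1 T.1, by
            have hi : i.1 ∉ T.1 := by
              have := i.2
              simp only [Finset.mem_sdiff, Finset.mem_univ, true_and] at this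
              exact this
            rw [Finset.card_insert_of_notMem hi, T.2]⟩ : kIdx n (q + 1))))

/-- The graded Betti number `β_{q,j}(I) = dim_k Tor_q^R(I,k)_j`, computed as the
dimension of the homology of the degree-`j` strand of the Koszul complex of `I`. -/
def betti (I : Ideal (MvPolynomial (Fin n) k)) (q j : ℕ) : ℕ :=
  match q with
  | 0 => finrank k (kSpace k I 0 (j : ℤ)) - finrank k ↥(LinearMap.range (koszulD k I 0 (j : ℤ)))
  | p + 1 =>
    finrank k ↥(LinearMap.ker (koszulD k I p (j : ℤ))) -
      finrank k ↥(LinearMap.range (koszulD k I (p + 1) (j : ℤ)))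

/-- `J` is `m`-regular: `β_{p,j}(J) = 0` whenever `j > m + p`. -/
def IsMReg (m : ℕ) (J : Ideal (MvPolynomial (Fin n) k)) : Prop :=
  ∀ p j : ℕ, m + p < j → betti k J p j = 0

/-! ### Monomial ideals, initial ideals, Gin and lex-segment ideals -/

/-- The degree reverse lexicographic order (as a strict relation) on exponent
vectors, for `x_1 > x_2 > ⋯ > x_n`. -/
def rlLT {n : ℕ} (μ ν : Fin n →₀ ℕ) : Prop :=
  monDeg μ < monDeg ν ∨
    (monDeg μ = monDeg ν ∧ ∃ i : Fin n, ν i < μ i ∧ ∀ l : Fin n, i < l → μ l = ν l)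

/-- The lexicographic order (as a strict relation) on exponent vectors,
for `x_1 > x_2 > ⋯ > x_n`. -/
def lexLT {n : ℕ} (μ ν : Fin n →₀ ℕ) : Prop :=
  ∃ i : Fin n, μ i < ν i ∧ ∀ l : Fin n, l < i → μ l = ν l

/-- `μ` is the leading (degrevlex-largest) monomial of `f`. -/
def IsLeadMon (f : MvPolynomial (Fin n) k) (μ : Fin n →₀ ℕ) : Prop :=
  f ≠ 0 ∧ μ ∈ f.support ∧ ∀ ν ∈ f.support, ν ≠ μ → rlLT ν μ

/-- The initial ideal of `I` with respect to the degree reverse lexicographic order. -/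
def initialIdeal (I : Ideal (MvPolynomial (Fin n) k)) : Ideal (MvPolynomial (Fin n) k) :=
  Ideal.span {x | ∃ f ∈ I, ∃ μ, IsLeadMon k f μ ∧ x = MvPolynomial.monomial μ (1 : k)}

/-- The linear change of coordinates determined by the matrix `g`. -/
def changeCoord (g : Fin n → Fin n → k) :
    MvPolynomial (Fin n) k →ₐ[k] MvPolynomial (Fin n) k :=
  MvPolynomial.aeval fun i => ∑ j, MvPolynomial.C (g i j) * X j

/-- `J` is the generic initial ideal (revlex) of `I`: for a generic change of
coordinates `g`, the initial ideal of `g·I` equals `J`. -/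
def IsGin (I J : Ideal (MvPolynomial (Fin n) k)) : Prop :=
  ∃ p : MvPolynomial (Fin n × Fin n) k, p ≠ 0 ∧
    ∀ g : Fin n → Fin n → k, MvPolynomial.eval (fun ij => g ij.1 ij.2) p ≠ 0 →
      initialIdeal k (Ideal.map (changeCoord k g) I) = J

/-- The lex-segment ideal associated to `I`: in each degree it is spanned by the
`dim_k I_d` lexicographically largest monomials. -/
def lexIdeal (I : Ideal (MvPolynomial (Fin n) k)) : Ideal (MvPolynomial (Fin n) k) :=
  Ideal.span {x | ∃ μ : Fin n →₀ ℕ,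
    Nat.card {ν : Fin n →₀ ℕ // monDeg ν = monDeg μ ∧ (ν = μ ∨ lexLT μ ν)} ≤ idim k I (monDeg μ)
    ∧ x = MvPolynomial.monomial μ (1 : k)}

/-- A monomial ideal: with every polynomial it contains all of its monomials. -/
def IsMonomialIdeal (J : Ideal (MvPolynomial (Fin n) k)) : Prop :=
  ∀ f ∈ J, ∀ μ ∈ f.support, MvPolynomial.monomial μ (1 : k) ∈ J

/-- A stable monomial ideal: for every monomial `w ∈ J` and `j < m(w)`,
`x_j·w/x_{m(w)} ∈ J`, where `m(w)` is the largest variable dividing `w`. -/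
def IsStable (J : Ideal (MvPolynomial (Fin n) k)) : Prop :=
  IsMonomialIdeal k J ∧
    ∀ (μ : Fin n →₀ ℕ) (i j : Fin n), MvPolynomial.monomial μ (1 : k) ∈ J → μ i ≠ 0 →
      (∀ l : Fin n, i < l → μ l = 0) → j < i →
      MvPolynomial.monomial (μ + Finsupp.single j 1 - Finsupp.single i 1) (1 : k) ∈ J

/-- A lex-segment ideal: a monomial ideal whose monomials in each degree form an
upward-closed set in the lexicographic order. -/
def IsLexSegmentIdeal (J : Ideal (MvPolynomial (Fin n) k)) : Prop :=
  IsMonomialIdeal k J ∧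
    ∀ μ ν : Fin n →₀ ℕ, monDeg μ = monDeg ν → MvPolynomial.monomial μ (1 : k) ∈ J →
      lexLT μ ν → MvPolynomial.monomial ν (1 : k) ∈ J

/-- `μ` is a minimal monomial generator of the monomial ideal `J`. -/
def IsMinGen (J : Ideal (MvPolynomial (Fin n) k)) (μ : Fin n →₀ ℕ) : Prop :=
  MvPolynomial.monomial μ (1 : k) ∈ J ∧
    ∀ i : Fin n, μ i ≠ 0 → MvPolynomial.monomial (μ - Finsupp.single i 1) (1 : k) ∉ J

/-- The ideal `(I_{≤ t})` generated by the homogeneous elements of `I` of degree `≤ t`. -/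
def trunc (I : Ideal (MvPolynomial (Fin n) k)) (t : ℕ) : Ideal (MvPolynomial (Fin n) k) :=
  Ideal.span {f | f ∈ I ∧ ∃ e ≤ t, f.IsHomogeneous e}

end

noncomputable section

variable (k : Type*) [Field k] {n : ℕ}

/-- `I` is a homogeneous ideal: it contains all homogeneous components of its elements. -/
def IsHomogIdeal (I : Ideal (MvPolynomial (Fin n) k)) : Prop :=
  ∀ f ∈ I, ∀ e : ℕ, MvPolynomial.homogeneousComponent e f ∈ I

end

noncomputable section Aux2

open MvPolynomial Module Submodule

noncomputable section Aux

variable {k : Type*} [Field k] {n : ℕ}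

local notation "V" => homogeneousSubmodule (Fin n) k

instance homog_fd (t : ℕ) : FiniteDimensional k ↥(V t) :=
  Submodule.finiteDimensional_of_le (S₂ := restrictTotalDegree (Fin n) k t)
    (fun f hf => (mem_restrictTotalDegree _ _ _).mpr
      ((mem_homogeneousSubmodule _ _).mp hf).totalDegree_le)

/-- degree-`t` part of an ideal as a submodule of `V t`. -/
def idealPiece (I : Ideal (MvPolynomial (Fin n) k)) (t : ℕ) : Submodule k ↥(V t) :=
  Submodule.comap (V t).subtype (I.restrictScalars k)

lemma mem_idealPiece {I : Ideal (MvPolynomial (Fin n) k)} {t : ℕ} {x : ↥(V t)} :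
    x ∈ idealPiece I t ↔ (x : MvPolynomial (Fin n) k) ∈ I := Iff.rfl

lemma finrank_idealPiece (I : Ideal (MvPolynomial (Fin n) k)) (t : ℕ) :
    finrank k ↥(idealPiece I t) = idim k I t := by
  have h1 : idealPiece I t
      = Submodule.comap (V t).subtype (I.restrictScalars k ⊓ V t) := by
    ext x; simp [idealPiece, x.2]
  rw [idim, h1, LinearEquiv.finrank_eq (Submodule.comapSubtypeEquivOfLe inf_le_right)]

abbrev Qu (I : Ideal (MvPolynomial (Fin n) k)) (t : ℕ) := ↥(V t) ⧸ idealPiece I t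

lemma finrank_Qu (I : Ideal (MvPolynomial (Fin n) k)) (t : ℕ) :
    finrank k (Qu I t) = hilb k I t := by
  have h2 := Submodule.finrank_quotient_add_finrank (idealPiece I t)
  rw [hilb, ← finrank_idealPiece]
  exact Nat.eq_sub_of_add_eq h2

lemma hilb_eq_zero_iff (J : Ideal (MvPolynomial (Fin n) k)) (t : ℕ) :
    hilb k J t = 0 ↔ V t ≤ J.restrictScalars k := by
  constructor
  · intro h0
    have hle : finrank k ↥(V t) ≤ idim k J t := Nat.sub_eq_zero_iff_le.mp h0
    have heq : (J.restrictScalars k ⊓ V t) = V t :=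
      Submodule.eq_of_le_of_finrank_le inf_le_right hle
    intro x hx
    have : x ∈ J.restrictScalars k ⊓ V t := heq.symm ▸ hx
    exact this.1
  · intro hle
    have heq : J.restrictScalars k ⊓ V t = V t := inf_eq_right.mpr hle
    rw [hilb, idim, heq, Nat.sub_self]

lemma degree_single_one (i : Fin n) : (Finsupp.single i 1 : Fin n →₀ ℕ).degree = 1 := by
  simp [Finsupp.degree_single]

lemma homog_step (J : Ideal (MvPolynomial (Fin n) k)) (t : ℕ)
    (hJ : V (t+1) ≤ J.restrictScalars k) :
    V (t+2) ≤ J.restrictScalars k := by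
  intro f hf
  have hfh : f.IsHomogeneous (t+2) := (mem_homogeneousSubmodule _ _).mp hf
  rw [show f = ∑ μ ∈ f.support, monomial μ (coeff μ f) from (f.as_sum)]
  refine Submodule.sum_mem _ (fun μ hμ => ?_)
  have hdeg : μ.degree = t + 2 := by
    rw [Finsupp.degree_eq_weight_one]
    exact hfh (mem_support_iff.mp hμ)
  obtain ⟨i, hi⟩ : ∃ i, μ i ≠ 0 := by
    by_contra hc
    push_neg at hc
    have : μ = 0 := Finsupp.ext (fun j => hc j)
    rw [this, map_zero] at hdeg
    omega
  have hμi : μ = (μ - Finsupp.single i 1) + Finsupp.single i 1 := by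
    ext j
    simp only [Finsupp.coe_add, Finsupp.coe_tsub, Pi.add_apply, Pi.sub_apply,
      Finsupp.single_apply]
    split_ifs with hji
    · subst hji; omega
    · omega
  have hdeg' : (μ - Finsupp.single i 1).degree = t + 1 := by
    have h2 : μ.degree = (μ - Finsupp.single i 1).degree + (Finsupp.single i 1 : Fin n →₀ ℕ).degree := by
      conv_lhs => rw [hμi]
      simp only [Finsupp.degree_eq_weight_one, map_add]
    rw [degree_single_one] at h2
    omega
  have hmem : (monomial (μ - Finsupp.single i 1) (coeff μ f) : MvPolynomial (Fin n) k) ∈ J :=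
    hJ ((mem_homogeneousSubmodule _ _).mpr (isHomogeneous_monomial _ hdeg'))
  have hXmul : (monomial μ (coeff μ f) : MvPolynomial (Fin n) k)
      = X i * monomial (μ - Finsupp.single i 1) (coeff μ f) := by
    rw [X, monomial_mul, one_mul, add_comm, ← hμi]
  rw [hXmul]
  exact Ideal.mul_mem_left _ _ hmem

lemma homogComp_mul_lin (b L : MvPolynomial (Fin n) k) (hL : L.IsHomogeneous 1) (t : ℕ) :
    homogeneousComponent (t+1) (b * L) = homogeneousComponent t b * L := by
  conv_lhs => rw [← sum_homogeneousComponent b, Finset.sum_mul, map_sum]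
  have key : ∀ e, homogeneousComponent (t+1) (homogeneousComponent e b * L)
      = if t = e then homogeneousComponent e b * L else 0 := by
    intro e
    rw [homogeneousComponent_of_mem ((mem_homogeneousSubmodule _ _).mpr
      ((homogeneousComponent_isHomogeneous e b).mul hL))]
    simp only [add_left_inj]
  rw [Finset.sum_congr rfl (fun e _ => key e), Finset.sum_ite_eq]
  split_ifs with hmem
  · rfl
  · rw [homogeneousComponent_eq_zero, zero_mul]
    rw [Finset.mem_range] at hmem
    omega

lemma mem_socPiece_of (I : Ideal (MvPolynomial (Fin n) k)) (t : ℕ)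
    (f : MvPolynomial (Fin n) k) (hf : f ∈ V t) (G : Set (MvPolynomial (Fin n) k))
    (hspan : ∀ i : Fin n, (X i : MvPolynomial (Fin n) k) ∈ Submodule.span k G)
    (hG : ∀ g ∈ G, g * f ∈ I) : f ∈ socPiece k I t := by
  refine Submodule.mem_inf.mpr ⟨hf, ?_⟩
  rw [Submodule.mem_iInf]
  intro i
  have hle : Submodule.span k G ≤
      Submodule.comap (LinearMap.mulRight k f) (I.restrictScalars k) :=
    Submodule.span_le.mpr (fun g hg => by
      simpa [LinearMap.mulRight_apply] using hG g hg)
  have hx := hle (hspan i)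
  simpa [LinearMap.mulRight_apply, LinearMap.mulLeft_apply] using hx

/-- Multiplication by a homogeneous degree-1 polynomial, `V t → V (t+1)`. -/
def mulV (w : MvPolynomial (Fin n) k) (hw : w.IsHomogeneous 1) (t : ℕ) :
    ↥(V t) →ₗ[k] ↥(V (t+1)) :=
  (LinearMap.mulLeft k w).restrict (fun x hx => by
    have := hw.mul ((mem_homogeneousSubmodule _ _).mp hx)
    rw [add_comm] at this
    exact (mem_homogeneousSubmodule _ _).mpr this)

/-- Multiplication by a homogeneous degree-1 polynomial on `Qu I`. -/
def mulQ (I : Ideal (MvPolynomial (Fin n) k)) (w : MvPolynomial (Fin n) k)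
    (hw : w.IsHomogeneous 1) (t : ℕ) : Qu I t →ₗ[k] Qu I (t+1) :=
  Submodule.mapQ _ _ (mulV w hw t) (fun x hx => by
    simp only [Submodule.mem_comap, mem_idealPiece, mulV, LinearMap.restrict_coe_apply,
      LinearMap.mulLeft_apply]
    exact Ideal.mul_mem_left _ _ hx)

lemma mulQ_mk (I : Ideal (MvPolynomial (Fin n) k)) (w : MvPolynomial (Fin n) k)
    (hw : w.IsHomogeneous 1) (t : ℕ) (x : ↥(V t)) :
    mulQ I w hw t (Submodule.Quotient.mk x)
      = Submodule.Quotient.mk (mulV w hw t x) := by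
  rw [mulQ, Submodule.mapQ_apply]

lemma mulV_coe (w : MvPolynomial (Fin n) k) (hw : w.IsHomogeneous 1) (t : ℕ) (x : ↥(V t)) :
    (mulV w hw t x : MvPolynomial (Fin n) k) = w * x :=
  LinearMap.restrict_coe_apply _ _ _

lemma mulQ_comm (I : Ideal (MvPolynomial (Fin n) k)) (w w' : MvPolynomial (Fin n) k)
    (hw : w.IsHomogeneous 1) (hw' : w'.IsHomogeneous 1) (t : ℕ) (x : Qu I t) :
    mulQ I w' hw' (t+1) (mulQ I w hw t x) = mulQ I w hw (t+1) (mulQ I w' hw' t x) := by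
  obtain ⟨y, rfl⟩ := Submodule.Quotient.mk_surjective _ x
  simp only [mulQ_mk]
  congr 1
  ext
  simp only [mulV_coe]
  ring_nf

lemma mulQ_surjective (I : Ideal (MvPolynomial (Fin n) k)) (hI : IsHomogIdeal k I)
    (L : MvPolynomial (Fin n) k) (hL : L.IsHomogeneous 1) (t : ℕ)
    (hV : V (t+1) ≤ (I ⊔ Ideal.span {L}).restrictScalars k) :
    Function.Surjective (mulQ I L hL t) := by
  intro y
  obtain ⟨⟨f, hf⟩, rfl⟩ := Submodule.Quotient.mk_surjective _ y
  have hfs : f ∈ I ⊔ Ideal.span {L} := hV hf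
  obtain ⟨a, ha, b, hb, hab⟩ := Submodule.mem_sup.mp hfs
  obtain ⟨g, hg⟩ := Ideal.mem_span_singleton'.mp hb
  -- f = a + g * L
  have hfcomp : f = homogeneousComponent (t+1) a + homogeneousComponent t g * L := by
    have h1 : homogeneousComponent (t+1) f = f :=
      (homogeneousComponent_of_mem hf).trans (if_pos rfl)
    calc f = homogeneousComponent (t+1) f := h1.symm
    _ = homogeneousComponent (t+1) (a + g * L) := by rw [hg, hab]
    _ = homogeneousComponent (t+1) a + homogeneousComponent (t+1) (g * L) := map_add _ _ _
    _ = homogeneousComponent (t+1) a + homogeneousComponent t g * L := by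
        rw [homogComp_mul_lin g L hL t]
  refine ⟨Submodule.Quotient.mk ⟨homogeneousComponent t g, homogeneousComponent_mem t g⟩, ?_⟩
  rw [mulQ_mk, Submodule.Quotient.eq]
  rw [mem_idealPiece]  -- membership of difference
  show (mulV L hL t _ : MvPolynomial (Fin n) k) - f ∈ I
  rw [mulV_coe]
  have : (L * homogeneousComponent t g : MvPolynomial (Fin n) k) - f
      = - homogeneousComponent (t+1) a := by
    rw [hfcomp]; ring
  rw [this]
  exact neg_mem (hI a ha (t+1))

lemma linForm_mem (c : Fin n → k) : linForm k c ∈ V 1 := by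
  refine Submodule.sum_mem _ (fun i _ => (mem_homogeneousSubmodule _ _).mpr ?_)
  simpa using (isHomogeneous_C (Fin n) (c i)).mul (isHomogeneous_X k i)

lemma span_X_linForm (c : Fin 3 → k) (j : Fin 3) (hcj : c j ≠ 0) (i : Fin 3) :
    (X i : MvPolynomial (Fin 3) k) ∈
      Submodule.span k {linForm k c, X (j+1), X (j+2)} := by
  have hL : linForm k c = c j • X j + c (j+1) • X (j+1) + c (j+2) • X (j+2) := by
    fin_cases j <;> simp [linForm, Fin.sum_univ_three, smul_eq_C_mul] <;> ring
  have h1 : (X (j+1) : MvPolynomial (Fin 3) k)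
      ∈ Submodule.span k {linForm k c, X (j+1), X (j+2)} := subset_span (by simp)
  have h2 : (X (j+2) : MvPolynomial (Fin 3) k)
      ∈ Submodule.span k {linForm k c, X (j+1), X (j+2)} := subset_span (by simp)
  have hLm : linForm k c
      ∈ Submodule.span k {linForm k c, X (j+1), X (j+2)} := subset_span (by simp)
  have hXj : (X j : MvPolynomial (Fin 3) k)
      ∈ Submodule.span k {linForm k c, X (j+1), X (j+2)} := by
    have key : linForm k c - c (j+1) • X (j+1) - c (j+2) • X (j+2)
        = c j • (X j : MvPolynomial (Fin 3) k) := by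
      rw [hL]; abel
    have hXj' : (X j : MvPolynomial (Fin 3) k)
        = (c j)⁻¹ • (linForm k c - c (j+1) • X (j+1) - c (j+2) • X (j+2)) := by
      rw [key, smul_smul, inv_mul_cancel₀ hcj, one_smul]
    rw [hXj']
    exact Submodule.smul_mem _ _ (sub_mem (sub_mem hLm (Submodule.smul_mem _ _ h1))
      (Submodule.smul_mem _ _ h2))
  have hcase : ∀ j' i' : Fin 3, i' = j' ∨ i' = j' + 1 ∨ i' = j' + 2 := by decide
  have hcase := hcase j i
  rcases hcase with rfl | rfl | rfl
  · exact hXj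
  · exact h1
  · exact h2

lemma exists_good_c [CharZero k] (I : Ideal (MvPolynomial (Fin n) k))
    (s : ℕ) (hIs : hilb k I (s+1) = 0) (e : ℕ) (hred : redNum k I ≤ e) :
    ∃ c : Fin n → k, hilb k (I ⊔ Ideal.span {linForm k c}) (e+1) = 0 ∧
      hilb k (I ⊔ Ideal.span {linForm k c}) (e+2) = 0 := by
  set S := {ℓ : ℕ | Generic k fun c : Fin n → k =>
    hilb k (I ⊔ Ideal.span {linForm k c}) (ℓ+1) = 0} with hS
  have hsS : s ∈ S := by
    refine ⟨1, one_ne_zero, fun c _ => ?_⟩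
    rw [hilb_eq_zero_iff] at hIs ⊢
    exact le_trans hIs (fun x hx => (le_sup_left : I ≤ I ⊔ Ideal.span {linForm k c}) hx)
  have hstep : ∀ t : ℕ, t ∈ S → t + 1 ∈ S := by
    rintro t ⟨p, hp, hpc⟩
    refine ⟨p, hp, fun c hc => ?_⟩
    show hilb k (I ⊔ Ideal.span {linForm k c}) (t + 1 + 1) = 0
    rw [hilb_eq_zero_iff]
    exact homog_step _ _ ((hilb_eq_zero_iff _ _).mp (hpc c hc))
  have hbase : redNum k I ∈ S := Nat.sInf_mem ⟨s, hsS⟩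
  have hmono : ∀ t : ℕ, redNum k I ≤ t → t ∈ S := by
    intro t ht
    induction t, ht using Nat.le_induction with
    | base => exact hbase
    | succ m _ hm => exact hstep m hm
  obtain ⟨p1, hp1, hc1⟩ := hmono e hred
  obtain ⟨p2, hp2, hc2⟩ := hmono (e+1) (le_trans hred (Nat.le_succ e))
  obtain ⟨c, hc⟩ : ∃ c : Fin n → k, eval c (p1 * p2) ≠ 0 := by
    by_contra hno
    push_neg at hno
    exact mul_ne_zero hp1 hp2 (MvPolynomial.funext fun x => by simpa using hno x)
  rw [map_mul] at hc
  exact ⟨c, hc1 c (left_ne_zero_of_mul hc), hc2 c (right_ne_zero_of_mul hc)⟩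

end Aux


set_option maxHeartbeats 2000000 in
/-- Let `R = k[x₁,x₂,x₃]` and `A = R/I` graded Artinian with h-vector
`(1,3,h₂,…,h_s)`. If `h_{d-1} − h_d = 2(h_d − h_{d+1}) > 0` for some `r₁(A) < d < s`,
then `A` is not level. -/
theorem stmt_11 {k : Type*} [Field k] [CharZero k]
    (I : Ideal (MvPolynomial (Fin 3) k)) (hI : IsHomogIdeal k I)
    (h : ℕ → ℕ) (hh : ∀ t, hilb k I t = h t)
    (h0 : h 0 = 1) (h1 : h 1 = 3)
    (s : ℕ) (hs : h s ≠ 0) (hart : ∀ t, s < t → h t = 0)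
    (d : ℕ) (hd1 : redNum k I < d) (hd2 : d < s)
    (heq : (h (d - 1) : ℤ) - h d = 2 * ((h d : ℤ) - h (d + 1)))
    (hpos : 0 < (h d : ℤ) - h (d + 1)) :
    ¬ IsLevel k I s := by
  intro hlev
  obtain ⟨e, rfl⟩ : ∃ e, d = e + 1 := ⟨d - 1, by omega⟩
  have hde : e + 1 - 1 = e := by omega
  rw [hde] at heq
  have hIs1 : hilb k I (s+1) = 0 := by rw [hh]; exact hart (s+1) (by omega)
  obtain ⟨c, hc1, hc2⟩ := exists_good_c I s hIs1 e (by omega)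
  set L := linForm k c with hLdef
  have hLhom : L.IsHomogeneous 1 := (mem_homogeneousSubmodule _ _).mp (linForm_mem c)
  obtain ⟨j, hcj⟩ : ∃ j, c j ≠ 0 := by
    by_contra hno
    push_neg at hno
    have hL0 : L = 0 := by simp [hLdef, linForm, hno]
    have hsup : I ⊔ Ideal.span {L} = I := by
      rw [hL0, Ideal.span_singleton_eq_bot.mpr rfl, sup_bot_eq]
    rw [hsup, hh] at hc1
    omega
  set u : MvPolynomial (Fin 3) k := X (j+1) with hu
  set v : MvPolynomial (Fin 3) k := X (j+2) with hv
  have huh : u.IsHomogeneous 1 := isHomogeneous_X _ _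
  have hvh : v.IsHomogeneous 1 := isHomogeneous_X _ _
  have hspan : ∀ i : Fin 3, (X i : MvPolynomial (Fin 3) k) ∈
      Submodule.span k {L, u, v} := span_X_linForm c j hcj
  have hsurj1 : Function.Surjective (mulQ I L hLhom e) :=
    mulQ_surjective I hI L hLhom e ((hilb_eq_zero_iff _ _).mp hc1)
  have hsurj2 : Function.Surjective (mulQ I L hLhom (e+1)) :=
    mulQ_surjective I hI L hLhom (e+1) ((hilb_eq_zero_iff _ _).mp hc2)
  have hrn1 := LinearMap.finrank_range_add_finrank_ker (mulQ I L hLhom e)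
  have hrn2 := LinearMap.finrank_range_add_finrank_ker (mulQ I L hLhom (e+1))
  rw [LinearMap.range_eq_top.mpr hsurj1, finrank_top, finrank_Qu, finrank_Qu, hh, hh] at hrn1
  rw [LinearMap.range_eq_top.mpr hsurj2, finrank_top, finrank_Qu, finrank_Qu, hh, hh] at hrn2
  have hdim : finrank k ↥(LinearMap.ker (mulQ I L hLhom e))
      = 2 * finrank k ↥(LinearMap.ker (mulQ I L hLhom (e+1))) := by omega
  have hK2pos : 0 < finrank k ↥(LinearMap.ker (mulQ I L hLhom (e+1))) := by omega
  have hresu : ∀ x ∈ LinearMap.ker (mulQ I L hLhom e),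
      mulQ I u huh e x ∈ LinearMap.ker (mulQ I L hLhom (e+1)) := by
    intro x hx
    rw [LinearMap.mem_ker] at hx ⊢
    rw [mulQ_comm I u L huh hLhom e x, hx, map_zero]
  have hresv : ∀ x ∈ LinearMap.ker (mulQ I L hLhom e),
      mulQ I v hvh e x ∈ LinearMap.ker (mulQ I L hLhom (e+1)) := by
    intro x hx
    rw [LinearMap.mem_ker] at hx ⊢
    rw [mulQ_comm I v L hvh hLhom e x, hx, map_zero]
  set ψ : ↥(LinearMap.ker (mulQ I L hLhom e)) →ₗ[k]
      ↥(LinearMap.ker (mulQ I L hLhom (e+1))) × ↥(LinearMap.ker (mulQ I L hLhom (e+1))) :=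
    LinearMap.prod ((mulQ I u huh e).restrict hresu) ((mulQ I v hvh e).restrict hresv)
    with hψ
  have hψ1 : ∀ (z : ↥(LinearMap.ker (mulQ I L hLhom e))),
      ((ψ z).1 : Qu I (e+1)) = mulQ I u huh e (z : Qu I e) := fun z => rfl
  have hψ2 : ∀ (z : ↥(LinearMap.ker (mulQ I L hLhom e))),
      ((ψ z).2 : Qu I (e+1)) = mulQ I v hvh e (z : Qu I e) := fun z => rfl
  have hinj : Function.Injective ψ := by
    rw [← LinearMap.ker_eq_bot, Submodule.eq_bot_iff]
    rintro ⟨x, hxK⟩ hker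
    rw [LinearMap.mem_ker] at hker
    have hk1 : mulQ I u huh e x = 0 := by
      rw [← hψ1 ⟨x, hxK⟩, hker]; rfl
    have hk2 : mulQ I v hvh e x = 0 := by
      rw [← hψ2 ⟨x, hxK⟩, hker]; rfl
    obtain ⟨⟨f, hfV⟩, hfx⟩ := Submodule.Quotient.mk_surjective _ x
    have hLf : L * f ∈ I := by
      have hx' := hxK
      rw [LinearMap.mem_ker, ← hfx, mulQ_mk, Submodule.Quotient.mk_eq_zero] at hx'
      rwa [mem_idealPiece, mulV_coe] at hx'
    have huf : u * f ∈ I := by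
      rw [← hfx, mulQ_mk, Submodule.Quotient.mk_eq_zero] at hk1
      rwa [mem_idealPiece, mulV_coe] at hk1
    have hvf : v * f ∈ I := by
      rw [← hfx, mulQ_mk, Submodule.Quotient.mk_eq_zero] at hk2
      rwa [mem_idealPiece, mulV_coe] at hk2
    have hsoc : f ∈ socPiece k I e := by
      refine mem_socPiece_of I e f hfV {L, u, v} hspan ?_
      rintro g hg
      simp only [Set.mem_insert_iff, Set.mem_singleton_iff] at hg
      rcases hg with rfl | rfl | rfl
      · exact hLf
      · exact huf
      · exact hvf
    have hfI : f ∈ I := hlev e (by omega) f hsoc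
    apply Subtype.ext
    show x = 0
    rw [← hfx, Submodule.Quotient.mk_eq_zero, mem_idealPiece]
    exact hfI
  have hfr : finrank k ↥(LinearMap.ker (mulQ I L hLhom e))
      = finrank k (↥(LinearMap.ker (mulQ I L hLhom (e+1)))
        × ↥(LinearMap.ker (mulQ I L hLhom (e+1)))) := by
    rw [Module.finrank_prod]; omega
  have hsurjψ : Function.Surjective ψ :=
    (LinearMap.injective_iff_surjective_of_finrank_eq_finrank hfr).mp hinj
  obtain ⟨w, hw0⟩ := Module.finrank_pos_iff_exists_ne_zero.mp hK2pos
  obtain ⟨⟨f, hfV⟩, hfw⟩ := Submodule.Quotient.mk_surjective _ (w : Qu I (e+1))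
  have hLf : L * f ∈ I := by
    have hx' := w.2
    rw [LinearMap.mem_ker, ← hfw, mulQ_mk, Submodule.Quotient.mk_eq_zero] at hx'
    rwa [mem_idealPiece, mulV_coe] at hx'
  have hfnI : f ∉ I := by
    intro hfI
    apply hw0
    apply Subtype.ext
    show (w : Qu I (e+1)) = 0
    rw [← hfw, Submodule.Quotient.mk_eq_zero, mem_idealPiece]
    exact hfI
  obtain ⟨t1, ht1⟩ := hsurjψ (w, 0)
  obtain ⟨t2, ht2⟩ := hsurjψ (0, w)
  have ht1u : mulQ I u huh e (t1 : Qu I e) = (w : Qu I (e+1)) := by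
    rw [← hψ1 t1, ht1]
  have ht1v : mulQ I v hvh e (t1 : Qu I e) = 0 := by
    rw [← hψ2 t1, ht1]; rfl
  have ht2u : mulQ I u huh e (t2 : Qu I e) = 0 := by
    rw [← hψ1 t2, ht2]; rfl
  have ht2v : mulQ I v hvh e (t2 : Qu I e) = (w : Qu I (e+1)) := by
    rw [← hψ2 t2, ht2]
  obtain ⟨⟨g, hgV⟩, hgt⟩ := Submodule.Quotient.mk_surjective _ (t1 : Qu I e)
  have hvg : v * g ∈ I := by
    rw [← hgt, mulQ_mk, Submodule.Quotient.mk_eq_zero] at ht1v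
    rwa [mem_idealPiece, mulV_coe] at ht1v
  have hug : u * g - f ∈ I := by
    rw [← hgt, mulQ_mk, ← hfw, Submodule.Quotient.eq] at ht1u
    rw [mem_idealPiece] at ht1u
    have heq2 : ((mulV u huh e ⟨g, hgV⟩ - ⟨f, hfV⟩ :
        ↥(homogeneousSubmodule (Fin 3) k (e+1))) : MvPolynomial (Fin 3) k)
        = u * g - f := by
      rw [Submodule.coe_sub, mulV_coe]
    rwa [heq2] at ht1u
  have hvf : v * f ∈ I := by
    have h1 : v * (u * g) ∈ I := by
      rw [show v * (u * g) = u * (v * g) by ring]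
      exact Ideal.mul_mem_left _ _ hvg
    have h2 : v * (u * g - f) ∈ I := Ideal.mul_mem_left _ _ hug
    rw [show v * f = v * (u * g) - v * (u * g - f) by ring]
    exact sub_mem h1 h2
  obtain ⟨⟨g2, hg2V⟩, hg2t⟩ := Submodule.Quotient.mk_surjective _ (t2 : Qu I e)
  have hug2 : u * g2 ∈ I := by
    rw [← hg2t, mulQ_mk, Submodule.Quotient.mk_eq_zero] at ht2u
    rwa [mem_idealPiece, mulV_coe] at ht2u
  have hvg2 : v * g2 - f ∈ I := by
    rw [← hg2t, mulQ_mk, ← hfw, Submodule.Quotient.eq] at ht2v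
    rw [mem_idealPiece] at ht2v
    have heq2 : ((mulV v hvh e ⟨g2, hg2V⟩ - ⟨f, hfV⟩ :
        ↥(homogeneousSubmodule (Fin 3) k (e+1))) : MvPolynomial (Fin 3) k)
        = v * g2 - f := by
      rw [Submodule.coe_sub, mulV_coe]
    rwa [heq2] at ht2v
  have huf : u * f ∈ I := by
    have h1 : u * (v * g2) ∈ I := by
      rw [show u * (v * g2) = v * (u * g2) by ring]
      exact Ideal.mul_mem_left _ _ hug2
    have h2 : u * (v * g2 - f) ∈ I := Ideal.mul_mem_left _ _ hvg2
    rw [show u * f = u * (v * g2) - u * (v * g2 - f) by ring]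
    exact sub_mem h1 h2
  have hsoc : f ∈ socPiece k I (e+1) := by
    refine mem_socPiece_of I (e+1) f hfV {L, u, v} hspan ?_
    rintro g' hg'
    simp only [Set.mem_insert_iff, Set.mem_singleton_iff] at hg'
    rcases hg' with rfl | rfl | rfl
    · exact hLf
    · exact huf
    · exact hvf
  exact hfnI (hlev (e+1) (by omega) f hsoc)
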